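/- Let A be a nonempty finite set, let Q be a strictly positive stochastic matrix on A with stationary probability vector mu, let P be the stationary Markov measure determined by (Q, mu), and let Q~ be the time-reversed kernel Q~(x,y) = mu(y) Q(y,x) / mu(x). Then for every p in R the limit Lambda(p) := lim_{n->infinity} (1/n) log E_P [ prod_{i=0}^{n-1} ( Q(omega_i, omega_{i+1}) / Q~(omega_i, omega_{i+1}) )^p ] exists, is finite, and satisfies the fluctuation-theorem (Gallavotti-Cohen) symmetry Lambda(p) = Lambda(-1-p) for all p in R. -/

import Mathlib

open MeasureTheory Filter Finset Real

section Aux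

variable {A : Type*} [Fintype A] [Nonempty A]

/-- backward vector: `vv M n x = (M^n 𝟙) x`. -/
noncomputable def vvAux (M : A → A → ℝ) : ℕ → A → ℝ
  | 0 => fun _ => 1
  | n + 1 => fun x => ∑ y, M x y * vvAux M n y

/-- forward vector: `ww μ M n x = (μᵀ M^n) x`. -/
noncomputable def wwAux (μ : A → ℝ) (M : A → A → ℝ) : ℕ → A → ℝ
  | 0 => μ
  | n + 1 => fun x => ∑ y, wwAux μ M n y * M y x

lemma vvAux_pos {M : A → A → ℝ} (hM : ∀ x y, 0 < M x y) : ∀ n x, 0 < vvAux M n x := by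
  intro n
  induction n with
  | zero => intro x; simp [vvAux]
  | succ n ih =>
    intro x
    exact Finset.sum_pos (fun y _ => mul_pos (hM x y) (ih y)) univ_nonempty

lemma pathsum (M : A → A → ℝ) :
    ∀ (n : ℕ) (c : A → ℝ),
      ∑ a : Fin (n + 1) → A, c (a 0) * ∏ i : Fin n, M (a i.castSucc) (a i.succ)
        = ∑ x, c x * vvAux M n x := by
  intro n
  induction n with
  | zero =>
    intro c
    rw [← (Equiv.funUnique (Fin 1) A).symm.sum_comp]
    simp [vvAux, Equiv.funUnique]
  | succ n ih =>
    intro c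
    set e : A × (Fin (n + 1) → A) ≃ (Fin (n + 2) → A) :=
      Fin.consEquiv (fun _ : Fin (n + 2) => A) with he
    rw [← e.sum_comp, Fintype.sum_prod_type]
    have key : ∀ (x : A) (b : Fin (n + 1) → A),
        c ((e (x, b)) 0) * ∏ i : Fin (n + 1), M ((e (x, b)) i.castSucc) ((e (x, b)) i.succ)
          = (c x * M x (b 0)) * ∏ i : Fin n, M (b i.castSucc) (b i.succ) := by
      intro x b
      have h0 : e (x, b) = Fin.cons x b := by rw [he]; rfl
      rw [h0, Fin.prod_univ_succ]
      have h2 : ∏ i : Fin n,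
          M ((Fin.cons x b : Fin (n + 2) → A) (i.succ.castSucc))
            ((Fin.cons x b : Fin (n + 2) → A) (i.succ.succ))
          = ∏ i : Fin n, M (b i.castSucc) (b i.succ) := by
        refine Finset.prod_congr rfl fun i _ => ?_
        rw [← Fin.succ_castSucc, Fin.cons_succ, Fin.cons_succ]
      rw [h2]
      have h1 : (Fin.cons x b : Fin (n + 2) → A) ((0 : Fin (n + 1)).castSucc) = x := by simp
      have h3 : (Fin.cons x b : Fin (n + 2) → A) ((0 : Fin (n + 1)).succ) = b 0 := by
        have : ((0 : Fin (n + 1)).succ) = (0 : Fin (n + 1)).succ := rfl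
        rw [Fin.cons_succ]
      rw [h1, h3]
      have h4 : (Fin.cons x b : Fin (n + 2) → A) 0 = x := Fin.cons_zero _ _
      rw [h4]
      ring
    calc ∑ x, ∑ b : Fin (n + 1) → A,
          c ((e (x, b)) 0) * ∏ i : Fin (n + 1), M ((e (x, b)) i.castSucc) ((e (x, b)) i.succ)
        = ∑ x, ∑ b : Fin (n + 1) → A,
            (c x * M x (b 0)) * ∏ i : Fin n, M (b i.castSucc) (b i.succ) := by
          refine Finset.sum_congr rfl fun x _ => Finset.sum_congr rfl fun b _ => key x b
      _ = ∑ x, ∑ y, (c x * M x y) * vvAux M n y := by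
          refine Finset.sum_congr rfl fun x _ => ih (fun y => c x * M x y)
      _ = ∑ x, c x * vvAux M (n + 1) x := by
          refine Finset.sum_congr rfl fun x _ => ?_
          simp only [vvAux, Finset.mul_sum]
          exact Finset.sum_congr rfl fun y _ => by ring

lemma slideAux (μ : A → ℝ) (M : A → A → ℝ) (m k : ℕ) :
    ∑ x, wwAux μ M (m + 1) x * vvAux M k x = ∑ x, wwAux μ M m x * vvAux M (k + 1) x := by
  simp only [wwAux, vvAux, Finset.sum_mul, Finset.mul_sum]
  rw [Finset.sum_comm]
  exact Finset.sum_congr rfl fun x _ => Finset.sum_congr rfl fun y _ => by ring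

lemma ww_vv (μ : A → ℝ) (M : A → A → ℝ) :
    ∀ (n m : ℕ), ∑ x, wwAux μ M n x * vvAux M m x = ∑ x, μ x * vvAux M (n + m) x := by
  intro n
  induction n with
  | zero => intro m; simp [wwAux, Nat.zero_add]
  | succ n ih =>
    intro m
    rw [slideAux, ih (m + 1)]
    have : n + (m + 1) = n + 1 + m := by omega
    rw [this]

lemma vv_rev (μ : A → ℝ) (hμ : ∀ x, 0 < μ x) (M M' : A → A → ℝ)
    (h : ∀ x y, μ x * M' x y = M y x * μ y) :
    ∀ n x, μ x * vvAux M' n x = wwAux μ M n x := by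
  intro n
  induction n with
  | zero => intro x; simp [vvAux, wwAux]
  | succ n ih =>
    intro x
    simp only [vvAux, wwAux, Finset.mul_sum]
    refine Finset.sum_congr rfl fun y _ => ?_
    rw [← ih y]
    calc μ x * (M' x y * vvAux M' n y) = (μ x * M' x y) * vvAux M' n y := by ring
      _ = (M y x * μ y) * vvAux M' n y := by rw [h x y]
      _ = μ y * vvAux M' n y * M y x := by ring

lemma vv_split {M : A → A → ℝ} (hM : ∀ x y, 0 < M x y) :
    ∀ (m n : ℕ) (x : A), vvAux M (m + n) x ≤ vvAux M m x * ∑ y, vvAux M n y := by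
  intro m
  induction m with
  | zero =>
    intro n x
    simp only [Nat.zero_add, vvAux, one_mul]
    exact Finset.single_le_sum (fun y _ => (vvAux_pos hM n y).le) (mem_univ x)
  | succ m ih =>
    intro n x
    have : m + 1 + n = (m + n) + 1 := by omega
    rw [this]
    simp only [vvAux, Finset.sum_mul]
    refine Finset.sum_le_sum fun y _ => ?_
    have := ih n y
    calc M x y * vvAux M (m + n) y ≤ M x y * (vvAux M m y * ∑ z, vvAux M n z) := by
          exact mul_le_mul_of_nonneg_left (ih n y) (hM x y).le
      _ = M x y * vvAux M m y * ∑ z, vvAux M n z := by ring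

lemma vv_lower {M : A → A → ℝ} (hM : ∀ x y, 0 < M x y) {m : ℝ} (hm0 : 0 < m)
    (hm : ∀ x y, m ≤ M x y) : ∀ (n : ℕ) (x : A), m ^ n ≤ vvAux M n x := by
  intro n
  induction n with
  | zero => intro x; simp [vvAux]
  | succ n ih =>
    intro x
    calc m ^ (n + 1) = m * m ^ n := by ring
      _ ≤ M x x * vvAux M n x :=
          mul_le_mul (hm x x) (ih x) (pow_nonneg hm0.le n) (hM x x).le
      _ ≤ ∑ y, M x y * vvAux M n y :=
          Finset.single_le_sum (fun y _ => (mul_pos (hM x y) (vvAux_pos hM n y)).le) (mem_univ x)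
      _ = vvAux M (n + 1) x := rfl

end Aux

/-- Gallavotti–Cohen fluctuation-theorem symmetry for the entropy production of a stationary
Markov chain: the scaled cumulant generating function `Λ` of
`∑_{i<n} log (Q(ω_i,ω_{i+1}) / Q~(ω_i,ω_{i+1}))`, where `Q~(x,y) = μ(y) Q(y,x) / μ(x)` is the
time-reversed kernel, exists, is finite, and satisfies `Λ(p) = Λ(-1-p)`. -/
theorem stmt13
    {A : Type*} [Fintype A] [Nonempty A] [MeasurableSpace A] [MeasurableSingletonClass A]
    (Q : A → A → ℝ) (μ : A → ℝ)
    (hQpos : ∀ x y, 0 < Q x y)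
    (hQrow : ∀ x, ∑ y, Q x y = 1)
    (hμnonneg : ∀ x, 0 ≤ μ x) (hμsum : ∑ x, μ x = 1)
    (hμstat : ∀ y, ∑ x, μ x * Q x y = μ y)
    (P : Measure (ℕ → A)) [IsProbabilityMeasure P]
    (hP : ∀ (n : ℕ) (a : ℕ → A),
      (P {ω | ∀ i ≤ n, ω i = a i}).toReal
        = μ (a 0) * ∏ i ∈ Finset.range n, Q (a i) (a (i + 1)))
    -- the time-reversed kernel
    (Qrev : A → A → ℝ)
    (hQrev : ∀ x y, Qrev x y = μ y * Q y x / μ x) :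
    ∃ Lam : ℝ → ℝ,
      (∀ p : ℝ,
        Tendsto (fun n : ℕ =>
            Real.log (∫ ω, (∏ i ∈ Finset.range n,
                (Q (ω i) (ω (i + 1)) / Qrev (ω i) (ω (i + 1)))) ^ p ∂P) / n)
          atTop (nhds (Lam p))) ∧
      ∀ p : ℝ, Lam p = Lam (-1 - p) := by
  classical
  -- positivity of μ
  have hμpos : ∀ y, 0 < μ y := by
    intro y
    obtain ⟨x0, hx0⟩ : ∃ x, 0 < μ x := by
      by_contra h
      push_neg at h
      have hz : ∀ x, μ x = 0 := fun x => le_antisymm (h x) (hμnonneg x)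
      have : (∑ x, μ x) = 0 := Finset.sum_eq_zero fun x _ => hz x
      rw [hμsum] at this
      norm_num at this
    rw [← hμstat y]
    exact Finset.sum_pos' (fun x _ => mul_nonneg (hμnonneg x) (hQpos x y).le)
      ⟨x0, Finset.mem_univ x0, mul_pos hx0 (hQpos x0 y)⟩
  have hQrevpos : ∀ x y, 0 < Qrev x y := by
    intro x y
    rw [hQrev]
    exact div_pos (mul_pos (hμpos y) (hQpos y x)) (hμpos x)
  have hrpos : ∀ x y, 0 < Q x y / Qrev x y := fun x y => div_pos (hQpos x y) (hQrevpos x y)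
  set Mp : ℝ → A → A → ℝ := fun p x y => Q x y * (Q x y / Qrev x y) ^ p with hMp
  have hMpos : ∀ p x y, 0 < Mp p x y := fun p x y =>
    mul_pos (hQpos x y) (Real.rpow_pos_of_pos (hrpos x y) p)
  set E : ℝ → ℕ → ℝ := fun p n => ∑ x, μ x * vvAux (Mp p) n x with hE
  have hEpos : ∀ p n, 0 < E p n := fun p n =>
    Finset.sum_pos (fun x _ => mul_pos (hμpos x) (vvAux_pos (hMpos p) n x)) univ_nonempty
  -- Step 1: the integral equals the path sum E p n
  have hInt : ∀ (p : ℝ) (n : ℕ),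
      (∫ ω, (∏ i ∈ Finset.range n,
          (Q (ω i) (ω (i + 1)) / Qrev (ω i) (ω (i + 1)))) ^ p ∂P) = E p n := by
    intro p n
    set ext : (Fin (n + 1) → A) → (ℕ → A) :=
      fun a j => if h : j ≤ n then a ⟨j, Nat.lt_succ_of_le h⟩ else a 0 with hext
    set C : (Fin (n + 1) → A) → Set (ℕ → A) := fun a => {ω | ∀ i ≤ n, ω i = ext a i} with hCdef
    have hCmeas : ∀ a, MeasurableSet (C a) := by
      intro a
      have hCe : C a = ⋂ i ∈ Finset.Iic n, (fun ω : ℕ → A => ω i) ⁻¹' {ext a i} := by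
        ext ω
        simp [hCdef]
      rw [hCe]
      exact Finset.measurableSet_biInter _
        (fun i _ => (measurable_pi_apply i) (measurableSet_singleton _))
    set F : (ℕ → A) → ℝ :=
      fun ω => (∏ i ∈ Finset.range n, (Q (ω i) (ω (i + 1)) / Qrev (ω i) (ω (i + 1)))) ^ p with hF
    have hext_le : ∀ (a : Fin (n + 1) → A) (j : ℕ) (hj : j ≤ n),
        ext a j = a ⟨j, Nat.lt_succ_of_le hj⟩ := by
      intro a j hj
      simp [hext, hj]
    have hpt : ∀ ω, F ω = ∑ a : Fin (n + 1) → A, Set.indicator (C a) (fun _ => F (ext a)) ω := by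
      intro ω
      set a0 : Fin (n + 1) → A := fun i => ω ↑i with ha0
      have hmem : ω ∈ C a0 := by
        intro i hi
        rw [hext_le a0 i hi]
      have hval : F (ext a0) = F ω := by
        simp only [hF]
        congr 1
        refine Finset.prod_congr rfl fun i hi => ?_
        rw [Finset.mem_range] at hi
        rw [hext_le a0 i (le_of_lt hi), hext_le a0 (i + 1) hi]
      rw [Finset.sum_eq_single a0]
      · rw [Set.indicator_of_mem hmem, hval]
      · intro b _ hb
        refine Set.indicator_of_notMem (fun hωb => hb ?_) _
        funext i
        have h1 : ω ↑i = ext b ↑i := hωb ↑i (Nat.le_of_lt_succ i.isLt)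
        have h2 : ext b ↑i = b i := by
          rw [hext_le b ↑i (Nat.le_of_lt_succ i.isLt)]
        rw [← h2, ← h1]
      · intro ha
        exact absurd (Finset.mem_univ a0) ha
    have hintF : (∫ ω, F ω ∂P) = ∑ a : Fin (n + 1) → A, (P (C a)).toReal • F (ext a) := by
      rw [integral_congr_ae (Filter.Eventually.of_forall hpt),
        integral_finset_sum _ (fun a _ => (integrable_const (F (ext a))).indicator (hCmeas a))]
      exact Finset.sum_congr rfl fun a _ => integral_indicator_const _ (hCmeas a)
    have hPC : ∀ a : Fin (n + 1) → A, (P (C a)).toReal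
        = μ (ext a 0) * ∏ i ∈ Finset.range n, Q (ext a i) (ext a (i + 1)) := fun a => hP n (ext a)
    have hterm : ∀ a : Fin (n + 1) → A,
        (P (C a)).toReal • F (ext a)
          = μ (a 0) * ∏ i : Fin n, Mp p (a i.castSucc) (a i.succ) := by
      intro a
      rw [hPC a, smul_eq_mul]
      have h0 : ext a 0 = a 0 := by
        rw [hext_le a 0 (Nat.zero_le n)]
        exact congrArg a (Fin.ext (by simp))
      have hcast : ∀ i : Fin n, ext a ↑i = a i.castSucc := by
        intro i
        rw [hext_le a ↑i (le_of_lt i.isLt)]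
        congr 1
      have hsucc : ∀ i : Fin n, ext a (↑i + 1) = a i.succ := by
        intro i
        rw [hext_le a (↑i + 1) i.isLt]
        congr 1
      have hQprod : ∏ i ∈ Finset.range n, Q (ext a i) (ext a (i + 1))
          = ∏ i : Fin n, Q (a i.castSucc) (a i.succ) := by
        rw [← Fin.prod_univ_eq_prod_range (fun j => Q (ext a j) (ext a (j + 1))) n]
        exact Finset.prod_congr rfl fun i _ => by rw [hcast i, hsucc i]
      have hFval : F (ext a)
          = ∏ i : Fin n, ((Q (a i.castSucc) (a i.succ) / Qrev (a i.castSucc) (a i.succ)) ^ p) := by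
        simp only [hF]
        rw [Real.finset_prod_rpow _ _ (fun i _ => (hrpos _ _).le) p]
        congr 1
        rw [← Fin.prod_univ_eq_prod_range
          (fun j => Q (ext a j) (ext a (j + 1)) / Qrev (ext a j) (ext a (j + 1))) n]
        exact Finset.prod_congr rfl fun i _ => by rw [hcast i, hsucc i]
      rw [h0, hQprod, hFval, mul_assoc, ← Finset.prod_mul_distrib]
    calc (∫ ω, F ω ∂P) = ∑ a : Fin (n + 1) → A, (P (C a)).toReal • F (ext a) := hintF
      _ = ∑ a : Fin (n + 1) → A, μ (a 0) * ∏ i : Fin n, Mp p (a i.castSucc) (a i.succ) :=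
          Finset.sum_congr rfl fun a _ => hterm a
      _ = ∑ x, μ x * vvAux (Mp p) n x := pathsum (Mp p) n μ
  -- Step 2: symmetry E (-1-p) n = E p n
  have hMrel : ∀ (p : ℝ) (x y : A), μ x * Mp (-1 - p) x y = Mp p y x * μ y := by
    intro p x y
    have hinv : (Q x y / Qrev x y)⁻¹ = Q y x / Qrev y x := by
      rw [hQrev, hQrev]
      field_simp
    have hexp : (Q x y / Qrev x y) ^ (-1 - p)
        = (Q x y / Qrev x y)⁻¹ * (Q y x / Qrev y x) ^ p := by
      rw [show (-1 - p : ℝ) = (-1) + (-p) by ring, Real.rpow_add (hrpos x y),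
        Real.rpow_neg_one, Real.rpow_neg (hrpos x y).le, ← Real.inv_rpow (hrpos x y).le, hinv]
    have hbase : μ x * (Q x y * (Q x y / Qrev x y)⁻¹) = Q y x * μ y := by
      rw [hQrev]
      have h1 : μ y * Q y x / μ x ≠ 0 :=
        ne_of_gt (div_pos (mul_pos (hμpos y) (hQpos y x)) (hμpos x))
      have h2 : μ x ≠ 0 := (hμpos x).ne'
      have h3 : Q x y ≠ 0 := (hQpos x y).ne'
      field_simp
    simp only [hMp]
    rw [hexp]
    calc μ x * (Q x y * ((Q x y / Qrev x y)⁻¹ * (Q y x / Qrev y x) ^ p))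
        = (μ x * (Q x y * (Q x y / Qrev x y)⁻¹)) * (Q y x / Qrev y x) ^ p := by ring
      _ = (Q y x * μ y) * (Q y x / Qrev y x) ^ p := by rw [hbase]
      _ = Q y x * (Q y x / Qrev y x) ^ p * μ y := by ring
  have hsym : ∀ (p : ℝ) (n : ℕ), E (-1 - p) n = E p n := by
    intro p n
    have h1 : ∀ x, μ x * vvAux (Mp (-1 - p)) n x = wwAux μ (Mp p) n x :=
      vv_rev μ hμpos (Mp p) (Mp (-1 - p)) (hMrel p) n
    have h2 : ∑ x, wwAux μ (Mp p) n x * vvAux (Mp p) 0 x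
        = ∑ x, μ x * vvAux (Mp p) (n + 0) x := ww_vv μ (Mp p) n 0
    simp only [vvAux, mul_one, Nat.add_zero] at h2
    calc E (-1 - p) n = ∑ x, μ x * vvAux (Mp (-1 - p)) n x := rfl
      _ = ∑ x, wwAux μ (Mp p) n x := Finset.sum_congr rfl fun x _ => h1 x
      _ = ∑ x, μ x * vvAux (Mp p) n x := h2
      _ = E p n := rfl
  -- Step 3: subadditivity and convergence
  obtain ⟨x₀, -, hx₀⟩ :=
    Finset.exists_min_image Finset.univ μ ⟨Classical.arbitrary A, Finset.mem_univ _⟩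
  set c : ℝ := μ x₀ with hc_def
  have hc : 0 < c := hμpos x₀
  have hc1 : c ≤ 1 := by
    have := Finset.single_le_sum (fun x _ => hμnonneg x) (Finset.mem_univ x₀)
    rwa [hμsum] at this
  set u : ℝ → ℕ → ℝ := fun p n => Real.log (E p n / c) with hu
  have hsub : ∀ p, Subadditive (u p) := by
    intro p m n
    have hS : 0 < ∑ y, vvAux (Mp p) n y :=
      Finset.sum_pos (fun y _ => vvAux_pos (hMpos p) n y) univ_nonempty
    have h1 : E p (m + n) ≤ E p m * ∑ y, vvAux (Mp p) n y := by
      calc E p (m + n) = ∑ x, μ x * vvAux (Mp p) (m + n) x := rfl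
        _ ≤ ∑ x, μ x * (vvAux (Mp p) m x * ∑ y, vvAux (Mp p) n y) :=
            Finset.sum_le_sum fun x _ =>
              mul_le_mul_of_nonneg_left (vv_split (hMpos p) m n x) (hμnonneg x)
        _ = (∑ x, μ x * vvAux (Mp p) m x) * ∑ y, vvAux (Mp p) n y := by
            rw [Finset.sum_mul]
            exact Finset.sum_congr rfl fun x _ => by ring
        _ = E p m * ∑ y, vvAux (Mp p) n y := rfl
    have h2 : c * ∑ y, vvAux (Mp p) n y ≤ E p n := by
      rw [Finset.mul_sum]
      exact Finset.sum_le_sum fun y _ =>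
        mul_le_mul_of_nonneg_right (hx₀ y (Finset.mem_univ y)) (vvAux_pos (hMpos p) n y).le
    have key : c * E p (m + n) ≤ E p m * E p n := by
      calc c * E p (m + n) ≤ c * (E p m * ∑ y, vvAux (Mp p) n y) :=
            mul_le_mul_of_nonneg_left h1 hc.le
        _ = E p m * (c * ∑ y, vvAux (Mp p) n y) := by ring
        _ ≤ E p m * E p n := mul_le_mul_of_nonneg_left h2 (hEpos p m).le
    have hle : E p (m + n) / c ≤ (E p m / c) * (E p n / c) := by
      rw [div_mul_div_comm, div_le_div_iff₀ hc (mul_pos hc hc)]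
      nlinarith [mul_le_mul_of_nonneg_right key hc.le]
    calc u p (m + n) = Real.log (E p (m + n) / c) := rfl
      _ ≤ Real.log ((E p m / c) * (E p n / c)) :=
          Real.log_le_log (div_pos (hEpos p (m + n)) hc) hle
      _ = Real.log (E p m / c) + Real.log (E p n / c) :=
          Real.log_mul (ne_of_gt (div_pos (hEpos p m) hc)) (ne_of_gt (div_pos (hEpos p n) hc))
  have hbdd : ∀ p, BddBelow (Set.range fun n : ℕ => u p n / n) := by
    intro p
    obtain ⟨q, -, hq⟩ := Finset.exists_min_image Finset.univ (fun z : A × A => Mp p z.1 z.2)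
      ⟨(x₀, x₀), Finset.mem_univ _⟩
    set m0 : ℝ := Mp p q.1 q.2 with hm0_def
    have hm0 : 0 < m0 := hMpos p q.1 q.2
    have hm0le : ∀ x y, m0 ≤ Mp p x y := fun x y => hq (x, y) (Finset.mem_univ _)
    have hElow : ∀ n : ℕ, m0 ^ n ≤ E p n := by
      intro n
      have h1 : ∑ x, μ x * m0 ^ n ≤ E p n :=
        Finset.sum_le_sum fun x _ =>
          mul_le_mul_of_nonneg_left (vv_lower (hMpos p) hm0 hm0le n x) (hμnonneg x)
      rwa [← Finset.sum_mul, hμsum, one_mul] at h1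
    refine ⟨min (Real.log m0) 0, ?_⟩
    rintro z ⟨n, rfl⟩
    rcases Nat.eq_zero_or_pos n with hn | hn
    · subst hn
      simp only [Nat.cast_zero, div_zero]
      exact min_le_right _ _
    · have hlow : m0 ^ n ≤ E p n / c := by
        have h1 : m0 ^ n ≤ m0 ^ n / c := by
          rw [le_div_iff₀ hc]
          nlinarith [pow_pos hm0 n]
        exact h1.trans (div_le_div_of_nonneg_right (hElow n) hc.le)
      have h2 : (n : ℝ) * Real.log m0 ≤ u p n := by
        have := Real.log_le_log (pow_pos hm0 n) hlow
        rwa [Real.log_pow] at this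
      have hn' : (0 : ℝ) < n := Nat.cast_pos.mpr hn
      have : Real.log m0 ≤ u p n / n := by
        rw [le_div_iff₀ hn']
        calc Real.log m0 * n = (n : ℝ) * Real.log m0 := by ring
          _ ≤ u p n := h2
      exact le_trans (min_le_left _ _) this
  have hlog : ∀ (p : ℝ) (n : ℕ), Real.log (E p n) = u p n + Real.log c := by
    intro p n
    rw [hu]
    rw [← Real.log_mul (ne_of_gt (div_pos (hEpos p n) hc)) (ne_of_gt hc),
      div_mul_cancel₀ _ (ne_of_gt hc)]
  refine ⟨fun p => (hsub p).lim, fun p => ?_, fun p => ?_⟩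
  · have h1 : Tendsto (fun n : ℕ => u p n / n + Real.log c / n) atTop
        (nhds ((hsub p).lim + 0)) :=
      ((hsub p).tendsto_lim (hbdd p)).add (tendsto_const_div_atTop_nhds_zero_nat _)
    rw [add_zero] at h1
    refine h1.congr fun n => ?_
    rw [← add_div, ← hlog p n, hInt p n]
  · have huv : u p = u (-1 - p) := by
      funext n
      rw [hu]
      simp only
      rw [hsym p n]
    simp only [Subadditive.lim, huv]
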